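/- The only nontrivial proper ideals of the extended Schrödinger-Virasoro algebra sv~ are: I₁ = span{M_n}, I₂ = span{M_n, Y_{n+1/2}}, I₃ = span{M_n, Y_{n+1/2}} ⊕ ℂN_0, and I₄ = span{M_n, N_n, Y_{n+1/2}} (n ranging over ℤ). -/

import Mathlib

/-- Index type for the basis of the extended Schrödinger-Virasoro Lie algebra.
`Y n` stands for the generator `Y_{n+1/2}`. -/
inductive SVIdx : Type
  | L : ℤ → SVIdx
  | M : ℤ → SVIdx
  | N : ℤ → SVIdx
  | Y : ℤ → SVIdx

/-- A complex Lie algebra `g` is (a copy of) the extended Schrödinger-Virasoro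
Lie algebra if it has a basis indexed by `SVIdx` whose brackets are given by the
structure constants of `sv~`. -/
structure ExtSV (g : Type*) [LieRing g] [LieAlgebra ℂ g] where
  b : Module.Basis SVIdx ℂ g
  LL : ∀ m n : ℤ, ⁅b (SVIdx.L m), b (SVIdx.L n)⁆ = ((n : ℂ) - (m : ℂ)) • b (SVIdx.L (m + n))
  MM : ∀ m n : ℤ, ⁅b (SVIdx.M m), b (SVIdx.M n)⁆ = 0
  NN : ∀ m n : ℤ, ⁅b (SVIdx.N m), b (SVIdx.N n)⁆ = 0
  YY : ∀ m n : ℤ, ⁅b (SVIdx.Y m), b (SVIdx.Y n)⁆ = ((m : ℂ) - (n : ℂ)) • b (SVIdx.M (m + n + 1))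
  LM : ∀ m n : ℤ, ⁅b (SVIdx.L m), b (SVIdx.M n)⁆ = (n : ℂ) • b (SVIdx.M (m + n))
  LN : ∀ m n : ℤ, ⁅b (SVIdx.L m), b (SVIdx.N n)⁆ = (n : ℂ) • b (SVIdx.N (m + n))
  LY : ∀ m n : ℤ, ⁅b (SVIdx.L m), b (SVIdx.Y n)⁆ =
      ((n : ℂ) + (1 - (m : ℂ)) / 2) • b (SVIdx.Y (m + n))
  NM : ∀ m n : ℤ, ⁅b (SVIdx.N m), b (SVIdx.M n)⁆ = (2 : ℂ) • b (SVIdx.M (m + n))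
  NY : ∀ m n : ℤ, ⁅b (SVIdx.N m), b (SVIdx.Y n)⁆ = b (SVIdx.Y (m + n))
  MY : ∀ m n : ℤ, ⁅b (SVIdx.M m), b (SVIdx.Y n)⁆ = 0

/-- The four candidate underlying subspaces of the nontrivial proper ideals of `sv~`. -/
noncomputable def ExtSV.idealCarriers {g : Type*} [LieRing g] [LieAlgebra ℂ g] (h : ExtSV g) :
    Fin 4 → Submodule ℂ g
  | 0 => Submodule.span ℂ (Set.range fun n : ℤ => h.b (SVIdx.M n))
  | 1 => Submodule.span ℂ
      (Set.range (fun n : ℤ => h.b (SVIdx.M n)) ∪ Set.range fun n : ℤ => h.b (SVIdx.Y n))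
  | 2 => Submodule.span ℂ
      (Set.range (fun n : ℤ => h.b (SVIdx.M n)) ∪ Set.range (fun n : ℤ => h.b (SVIdx.Y n)) ∪
        {h.b (SVIdx.N 0)})
  | 3 => Submodule.span ℂ
      (Set.range (fun n : ℤ => h.b (SVIdx.M n)) ∪ Set.range (fun n : ℤ => h.b (SVIdx.N n)) ∪
        Set.range fun n : ℤ => h.b (SVIdx.Y n))

namespace ExtSVAux

/-- weight (doubled) of a basis index -/
def w : SVIdx → ℤ
  | .L n => 2*n
  | .M n => 2*n
  | .N n => 2*n
  | .Y n => 2*n+1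

variable {g : Type*} [LieRing g] [LieAlgebra ℂ g] (h : ExtSV g)

/-- twice ad(L₀), a diagonal operator. -/
noncomputable def D : g →ₗ[ℂ] g := (2:ℂ) • (LieAlgebra.ad ℂ g (h.b (.L 0)))

lemma D_apply_b (i : SVIdx) : D h (h.b i) = (w i : ℂ) • h.b i := by
  cases i with
  | L n => simp [D, LieAlgebra.ad_apply, h.LL, w, smul_smul]
  | M n => simp [D, LieAlgebra.ad_apply, h.LM, w, smul_smul]
  | N n => simp [D, LieAlgebra.ad_apply, h.LN, w, smul_smul]
  | Y n => simp [D, LieAlgebra.ad_apply, h.LY, w, smul_smul]; ring_nf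

lemma repr_D (x : g) (i : SVIdx) :
    h.b.repr (D h x) i = (w i : ℂ) * h.b.repr x i := by
  have hmaps : (Finsupp.lapply i ∘ₗ (h.b.repr : g →ₗ[ℂ] (SVIdx →₀ ℂ)) ∘ₗ D h)
      = (w i : ℂ) • (Finsupp.lapply i ∘ₗ (h.b.repr : g →ₗ[ℂ] (SVIdx →₀ ℂ))) := by
    apply h.b.ext
    intro j
    simp only [LinearMap.comp_apply, LinearMap.smul_apply, D_apply_b, map_smul,
      Module.Basis.repr_self, Finsupp.lapply_apply, Finsupp.smul_apply, Finsupp.single_apply]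
    rcases eq_or_ne j i with rfl | hne
    · simp
    · simp [hne]
  exact LinearMap.congr_fun hmaps x

/-- projection onto the weight-`c` component. -/
noncomputable def proj (c : ℤ) : g →ₗ[ℂ] g :=
  h.b.constr ℂ (fun i => if w i = c then h.b i else 0)

lemma proj_apply_b (c : ℤ) (i : SVIdx) :
    proj h c (h.b i) = if w i = c then h.b i else 0 :=
  h.b.constr_basis ℂ _ i

lemma repr_proj (c : ℤ) (x : g) (i : SVIdx) :
    h.b.repr (proj h c x) i = if w i = c then h.b.repr x i else 0 := by
  have hmaps : (Finsupp.lapply i ∘ₗ (h.b.repr : g →ₗ[ℂ] (SVIdx →₀ ℂ)) ∘ₗ proj h c)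
      = if w i = c then (Finsupp.lapply i ∘ₗ (h.b.repr : g →ₗ[ℂ] (SVIdx →₀ ℂ))) else 0 := by
    apply h.b.ext
    intro j
    simp only [LinearMap.comp_apply, proj_apply_b, Finsupp.lapply_apply]
    rcases eq_or_ne j i with rfl | hne
    · by_cases hc : w j = c <;> simp [hc]
    · by_cases hc : w j = c <;> by_cases hc' : w i = c <;>
        simp [hc, hc', Module.Basis.repr_self, Finsupp.single_apply, hne]
  have := LinearMap.congr_fun hmaps x
  simpa only [LinearMap.comp_apply, Finsupp.lapply_apply] using
    (by rcases eq_or_ne (w i) c with hc | hc <;> simp [hc] at this ⊢ <;> exact this)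


lemma smul_cancel {I : LieIdeal ℂ g} {c : ℂ} (hc : c ≠ 0) {v : g}
    (hv : c • v ∈ I) : v ∈ I := by
  have := I.smul_mem c⁻¹ hv
  rwa [smul_smul, inv_mul_cancel₀ hc, one_smul] at this

lemma D_mem {I : LieIdeal ℂ g} {x : g} (hx : x ∈ I) : D h x ∈ I := by
  have : ⁅h.b (.L 0), x⁆ ∈ I := I.lie_mem hx
  simp only [D, LinearMap.smul_apply, LieAlgebra.ad_apply]
  exact I.smul_mem (2:ℂ) this

lemma proj_mem_aux (I : LieIdeal ℂ g) (S : Finset ℤ) :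
    ∀ x ∈ I, (∀ i, h.b.repr x i ≠ 0 → w i ∈ S) → ∀ c, proj h c x ∈ I := by
  induction S using Finset.strongInduction with
  | _ S ih =>
    intro x hx hsupp c
    by_cases hc : ∀ i, h.b.repr x i ≠ 0 → w i = c
    · have hxc : proj h c x = x := by
        apply h.b.repr.injective
        ext i
        rw [repr_proj]
        by_cases hwi : w i = c
        · simp [hwi]
        · simp only [hwi, if_false]
          by_contra hne
          exact hwi (hc i (Ne.symm hne))
      rwa [hxc]
    · push_neg at hc
      obtain ⟨i0, hi0, hne⟩ := hc
      set d := w i0 with hd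
      have hdS : d ∈ S := hsupp i0 hi0
      set y := D h x - (d:ℂ) • x with hy
      have hyI : y ∈ I := I.sub_mem (D_mem h hx) (I.smul_mem _ hx)
      have hrepry : ∀ i, h.b.repr y i = ((w i : ℂ) - (d:ℂ)) * h.b.repr x i := by
        intro i
        simp [hy, repr_D, sub_mul]
      have hsuppy : ∀ i, h.b.repr y i ≠ 0 → w i ∈ S.erase d := by
        intro i hi
        rw [hrepry] at hi
        have h1 : h.b.repr x i ≠ 0 := fun h0 => hi (by simp [h0])
        have h2 : (w i : ℂ) ≠ (d : ℂ) := fun h0 => hi (by rw [h0]; ring)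
        exact Finset.mem_erase.2 ⟨fun h0 => h2 (by exact_mod_cast h0), hsupp i h1⟩
      have hrec := ih (S.erase d) (Finset.erase_ssubset hdS) y hyI hsuppy c
      have hproj : proj h c y = ((c:ℂ) - (d:ℂ)) • proj h c x := by
        apply h.b.repr.injective
        ext i
        rw [map_smul, Finsupp.smul_apply, repr_proj, repr_proj, hrepry]
        by_cases hwi : w i = c
        · rw [if_pos hwi, if_pos hwi, hwi, smul_eq_mul]
        · simp [hwi]
      rw [hproj] at hrec
      have hcd : (c:ℂ) - (d:ℂ) ≠ 0 := by
        intro h0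
        apply hne
        have : (d:ℂ) = (c:ℂ) := by linear_combination -h0
        exact_mod_cast this
      exact smul_cancel hcd hrec

lemma proj_mem (I : LieIdeal ℂ g) {x : g} (hx : x ∈ I) (c : ℤ) : proj h c x ∈ I := by
  refine proj_mem_aux h I ((h.b.repr x).support.image w) x hx ?_ c
  intro i hi
  exact Finset.mem_image_of_mem w (Finsupp.mem_support_iff.2 hi)

lemma proj_even (x : g) (n : ℤ) :
    proj h (2*n) x = h.b.repr x (.L n) • h.b (.L n) + h.b.repr x (.M n) • h.b (.M n)
      + h.b.repr x (.N n) • h.b (.N n) := by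
  apply h.b.repr.injective
  ext i
  rw [repr_proj]
  simp only [map_add, map_smul, Finsupp.add_apply, Finsupp.smul_apply, Module.Basis.repr_self,
    Finsupp.single_apply, smul_eq_mul]
  cases i with
  | L m =>
    by_cases hmn : m = n
    · subst hmn; simp [w]
    · have h2 : ¬ (2*m = 2*n) := by omega
      have h3 : SVIdx.L n ≠ SVIdx.L m := by
        intro hh; injection hh with hh'; exact hmn hh'.symm
      simp [w, h2, Finsupp.single_eq_of_ne' h3]
  | M m =>
    by_cases hmn : m = n
    · subst hmn; simp [w]
    · have h2 : ¬ (2*m = 2*n) := by omega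
      have h3 : SVIdx.M n ≠ SVIdx.M m := by
        intro hh; injection hh with hh'; exact hmn hh'.symm
      simp [w, h2, Finsupp.single_eq_of_ne' h3]
  | N m =>
    by_cases hmn : m = n
    · subst hmn; simp [w]
    · have h2 : ¬ (2*m = 2*n) := by omega
      have h3 : SVIdx.N n ≠ SVIdx.N m := by
        intro hh; injection hh with hh'; exact hmn hh'.symm
      simp [w, h2, Finsupp.single_eq_of_ne' h3]
  | Y m =>
    have : ¬ (2*m+1 = 2*n) := by omega
    simp [w, this]

lemma proj_odd (x : g) (n : ℤ) :
    proj h (2*n+1) x = h.b.repr x (.Y n) • h.b (.Y n) := by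
  apply h.b.repr.injective
  ext i
  rw [repr_proj]
  simp only [map_smul, Finsupp.smul_apply, Module.Basis.repr_self, Finsupp.single_apply, smul_eq_mul]
  cases i with
  | L m => have : ¬ (2*m = 2*n+1) := by omega
           simp [w, this]
  | M m => have : ¬ (2*m = 2*n+1) := by omega
           simp [w, this]
  | N m => have : ¬ (2*m = 2*n+1) := by omega
           simp [w, this]
  | Y m =>
    by_cases hmn : m = n
    · subst hmn; simp [w]
    · have h2 : ¬ (2*m+1 = 2*n+1) := by omega
      have h3 : SVIdx.Y n ≠ SVIdx.Y m := by
        intro hh; injection hh with hh'; exact hmn hh'.symm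
      simp [w, h2, Finsupp.single_eq_of_ne' h3]


/-! ### Reversed bracket formulas -/

lemma YL (k n : ℤ) : ⁅h.b (.Y k), h.b (.L n)⁆
    = (-((k:ℂ) + (1 - (n:ℂ))/2)) • h.b (.Y (n + k)) := by
  rw [← lie_skew, h.LY, neg_smul]

lemma YM (k n : ℤ) : ⁅h.b (.Y k), h.b (.M n)⁆ = 0 := by
  rw [← lie_skew, h.MY, neg_zero]

lemma YN (k n : ℤ) : ⁅h.b (.Y k), h.b (.N n)⁆ = -(h.b (.Y (n + k))) := by
  rw [← lie_skew, h.NY]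

lemma MN (m n : ℤ) : ⁅h.b (.M m), h.b (.N n)⁆ = (-(2:ℂ)) • h.b (.M (n + m)) := by
  rw [← lie_skew, h.NM, neg_smul]

lemma NL (k n : ℤ) : ⁅h.b (.N k), h.b (.L n)⁆ = (-(k:ℂ)) • h.b (.N (n + k)) := by
  rw [← lie_skew, h.LN, neg_smul]

lemma ML (m n : ℤ) : ⁅h.b (.M m), h.b (.L n)⁆ = (-(m:ℂ)) • h.b (.M (n + m)) := by
  rw [← lie_skew, h.LM, neg_smul]

/-! ### Generation lemmas -/

variable {I : LieIdeal ℂ g}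

lemma allM_of_M {j : ℤ} (hj : h.b (.M j) ∈ I) (n : ℤ) : h.b (.M n) ∈ I := by
  have h1 : ⁅h.b (.N (n - j)), h.b (.M j)⁆ ∈ I := I.lie_mem hj
  rw [h.NM] at h1
  have h2 := smul_cancel (two_ne_zero) h1
  simpa using h2

lemma allY_of_Y {j : ℤ} (hj : h.b (.Y j) ∈ I) (n : ℤ) : h.b (.Y n) ∈ I := by
  have h1 : ⁅h.b (.N (n - j)), h.b (.Y j)⁆ ∈ I := I.lie_mem hj
  rw [h.NY] at h1
  simpa using h1

lemma allM_of_allY (hY : ∀ n, h.b (.Y n) ∈ I) (n : ℤ) : h.b (.M n) ∈ I := by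
  by_cases hn : n = -1
  · subst hn
    have h1 : ⁅h.b (.Y 0), h.b (.Y (-2))⁆ ∈ I := I.lie_mem (hY (-2))
    rw [h.YY] at h1
    norm_num at h1
    exact smul_cancel (two_ne_zero) h1
  · have h1 : ⁅h.b (.Y n), h.b (.Y (-1))⁆ ∈ I := I.lie_mem (hY (-1))
    rw [h.YY] at h1
    have h2 : ((n:ℂ) - ((-1 : ℤ):ℂ)) ≠ 0 := by
      intro h0
      apply hn
      have : (n:ℂ) = ((-1 : ℤ):ℂ) := by linear_combination h0
      exact_mod_cast this
    have h3 := smul_cancel h2 h1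
    have h4 : n + -1 + 1 = n := by ring
    rwa [h4] at h3

lemma allY_of_N {j : ℤ} (hj : h.b (.N j) ∈ I) (n : ℤ) : h.b (.Y n) ∈ I := by
  have h1 : ⁅h.b (.Y (n - j)), h.b (.N j)⁆ ∈ I := I.lie_mem hj
  rw [YN] at h1
  have h2 := I.neg_mem h1
  rw [neg_neg] at h2
  have h4 : j + (n - j) = n := by ring
  rwa [h4] at h2

lemma allN_of_N {j : ℤ} (hj0 : j ≠ 0) (hj : h.b (.N j) ∈ I) (n : ℤ) : h.b (.N n) ∈ I := by
  have h1 : ⁅h.b (.L (n - j)), h.b (.N j)⁆ ∈ I := I.lie_mem hj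
  rw [h.LN] at h1
  have h2 : (j:ℂ) ≠ 0 := by exact_mod_cast hj0
  have h3 := smul_cancel h2 h1
  simpa using h3

lemma allL_of_L {n : ℤ} (hn : h.b (.L n) ∈ I) (s : ℤ) : h.b (.L s) ∈ I := by
  have step : ∀ s : ℤ, s ≠ 2*n → h.b (.L s) ∈ I := by
    intro s hs
    have h1 : ⁅h.b (.L (s - n)), h.b (.L n)⁆ ∈ I := I.lie_mem hn
    rw [h.LL] at h1
    have h2 : ((n:ℂ) - ((s - n : ℤ):ℂ)) ≠ 0 := by
      intro h0
      apply hs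
      have : ((s - n : ℤ):ℂ) = (n:ℂ) := by linear_combination -h0
      have := (Int.cast_injective (α := ℂ)) this
      omega
    have h3 := smul_cancel h2 h1
    simpa using h3
  by_cases hs : s = 2*n
  · subst hs
    by_cases h1 : n = 1
    · subst h1
      have h3 : h.b (.L 3) ∈ I := step 3 (by norm_num)
      have h4 : ⁅h.b (.L (-1)), h.b (.L 3)⁆ ∈ I := I.lie_mem h3
      rw [h.LL] at h4
      norm_num at h4
      exact smul_cancel (by norm_num : (4:ℂ) ≠ 0) h4
    · have hnp : h.b (.L (n+1)) ∈ I := step (n+1) (by omega)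
      have h4 : ⁅h.b (.L (n-1)), h.b (.L (n+1))⁆ ∈ I := I.lie_mem hnp
      rw [h.LL] at h4
      have h5 : (((n+1 : ℤ)):ℂ) - (((n-1 : ℤ)):ℂ) = 2 := by push_cast; ring
      rw [h5] at h4
      have h6 := smul_cancel (two_ne_zero) h4
      have h7 : n - 1 + (n + 1) = 2*n := by ring
      rwa [h7] at h6
  · exact step s hs

lemma eq_top_of_allb (hb : ∀ i, h.b i ∈ I) : I = ⊤ := by
  have htop : (⊤ : Submodule ℂ g) ≤ (I : Submodule ℂ g) := by
    rw [← h.b.span_eq]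
    refine Submodule.span_le.2 ?_
    rintro v ⟨i, rfl⟩
    exact hb i
  ext x
  simp only [LieSubmodule.mem_top, iff_true]
  exact htop (Submodule.mem_top)

lemma eq_top_of_L {n : ℤ} (hn : h.b (.L n) ∈ I) : I = ⊤ := by
  have hLs := allL_of_L h hn
  have hNs : ∀ m : ℤ, h.b (.N m) ∈ I := by
    intro m
    have h1 : ⁅h.b (.N 1), h.b (.L (m - 1))⁆ ∈ I := I.lie_mem (hLs (m-1))
    rw [NL] at h1
    have h2 := smul_cancel (show (-(((1:ℤ)):ℂ)) ≠ 0 by norm_num) h1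
    have h3 : m - 1 + 1 = m := by ring
    rwa [h3] at h2
  have hYs := allY_of_N h (hNs 0)
  have hMs := allM_of_allY h hYs
  apply eq_top_of_allb h
  intro i
  cases i with
  | L m => exact hLs m
  | M m => exact hMs m
  | N m => exact hNs m
  | Y m => exact hYs m

/-! ### Span membership lemmas -/

lemma mem_span_of_repr (s : Set SVIdx) (x : g) (hx : ∀ i, h.b.repr x i ≠ 0 → i ∈ s) :
    x ∈ Submodule.span ℂ (h.b '' s) := by
  rw [← h.b.linearCombination_repr x, Finsupp.linearCombination_apply]
  apply Submodule.finsuppSum_mem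
  intro i hi
  exact Submodule.smul_mem _ _ (Submodule.subset_span (Set.mem_image_of_mem _ (hx i hi)))

lemma repr_zero_of_mem_span {s : Set SVIdx} {x : g}
    (hx : x ∈ Submodule.span ℂ (h.b '' s)) {i : SVIdx} (hi : i ∉ s) : h.b.repr x i = 0 := by
  have hker : Submodule.span ℂ (h.b '' s)
      ≤ LinearMap.ker (Finsupp.lapply i ∘ₗ (h.b.repr : g →ₗ[ℂ] (SVIdx →₀ ℂ))) := by
    refine Submodule.span_le.2 ?_
    rintro v ⟨j, hj, rfl⟩
    have hne : j ≠ i := fun hh => hi (hh ▸ hj)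
    simp [LinearMap.mem_ker, Module.Basis.repr_self, Finsupp.single_eq_of_ne' hne]
  simpa using hker hx


/-! ### Carrier descriptions -/

def sIdx : Fin 4 → Set SVIdx
  | 0 => Set.range SVIdx.M
  | 1 => Set.range SVIdx.M ∪ Set.range SVIdx.Y
  | 2 => Set.range SVIdx.M ∪ Set.range SVIdx.Y ∪ {SVIdx.N 0}
  | 3 => Set.range SVIdx.M ∪ Set.range SVIdx.N ∪ Set.range SVIdx.Y

lemma range_eq (f : ℤ → SVIdx) : (Set.range fun n => h.b (f n)) = h.b '' Set.range f :=
  Set.range_comp _ _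

lemma carrier_eq (k : Fin 4) : h.idealCarriers k = Submodule.span ℂ (h.b '' sIdx k) := by
  fin_cases k <;>
    simp [ExtSV.idealCarriers, sIdx, range_eq, Set.image_union, Set.image_singleton,
      Set.union_singleton, Set.image_insert_eq]

/-! ### Bracket closure of the carriers -/

lemma lie_basis_mem {s : Set SVIdx}
    (hs : ∀ j i, i ∈ s → ⁅h.b j, h.b i⁆ ∈ Submodule.span ℂ (h.b '' s))
    {i : SVIdx} (hi : i ∈ s) (x : g) : ⁅x, h.b i⁆ ∈ Submodule.span ℂ (h.b '' s) := by
  have hx : x ∈ Submodule.span ℂ (Set.range h.b) := by rw [h.b.span_eq]; trivial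
  induction hx using Submodule.span_induction with
  | mem u hu => obtain ⟨j, rfl⟩ := hu; exact hs j i hi
  | zero => rw [zero_lie]; exact Submodule.zero_mem _
  | add u v _ _ hu hv => rw [add_lie]; exact Submodule.add_mem _ hu hv
  | smul a u _ hu => rw [smul_lie]; exact Submodule.smul_mem _ _ hu

lemma lie_mem_span {s : Set SVIdx}
    (hs : ∀ j i, i ∈ s → ⁅h.b j, h.b i⁆ ∈ Submodule.span ℂ (h.b '' s))
    (x : g) {y : g} (hy : y ∈ Submodule.span ℂ (h.b '' s)) :
    ⁅x, y⁆ ∈ Submodule.span ℂ (h.b '' s) := by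
  induction hy using Submodule.span_induction with
  | mem u hu => obtain ⟨i, hi, rfl⟩ := hu; exact lie_basis_mem h hs hi x
  | zero => rw [lie_zero]; exact Submodule.zero_mem _
  | add u v _ _ hu hv => rw [lie_add]; exact Submodule.add_mem _ hu hv
  | smul a u _ hu => rw [lie_smul]; exact Submodule.smul_mem _ _ hu

lemma basis_mem_span {s : Set SVIdx} {i : SVIdx} (hi : i ∈ s) :
    h.b i ∈ Submodule.span ℂ (h.b '' s) :=
  Submodule.subset_span (Set.mem_image_of_mem _ hi)

lemma sIdx_closed (k : Fin 4) :
    ∀ j i, i ∈ sIdx k → ⁅h.b j, h.b i⁆ ∈ Submodule.span ℂ (h.b '' sIdx k) := by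
  have memM : ∀ (k : Fin 4) (n : ℤ), h.b (.M n) ∈ Submodule.span ℂ (h.b '' sIdx k) := by
    intro k n
    refine basis_mem_span h ?_
    fin_cases k <;> simp [sIdx]
  have memY : ∀ (k : Fin 4), k ≠ 0 → ∀ n : ℤ,
      h.b (.Y n) ∈ Submodule.span ℂ (h.b '' sIdx k) := by
    intro k hk n
    refine basis_mem_span h ?_
    fin_cases k <;> simp [sIdx] at hk ⊢
  -- brackets with an M generator
  have hM : ∀ (k : Fin 4) (j) (n : ℤ),
      ⁅h.b j, h.b (.M n)⁆ ∈ Submodule.span ℂ (h.b '' sIdx k) := by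
    intro k j n
    cases j with
    | L m => rw [h.LM]; exact Submodule.smul_mem _ _ (memM k _)
    | M m => rw [h.MM]; exact Submodule.zero_mem _
    | N m => rw [h.NM]; exact Submodule.smul_mem _ _ (memM k _)
    | Y m => rw [YM]; exact Submodule.zero_mem _
  -- brackets with a Y generator
  have hY : ∀ (k : Fin 4), k ≠ 0 → ∀ (j) (n : ℤ),
      ⁅h.b j, h.b (.Y n)⁆ ∈ Submodule.span ℂ (h.b '' sIdx k) := by
    intro k hk j n
    cases j with
    | L m => rw [h.LY]; exact Submodule.smul_mem _ _ (memY k hk _)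
    | M m => rw [h.MY]; exact Submodule.zero_mem _
    | N m => rw [h.NY]; exact memY k hk _
    | Y m => rw [h.YY]; exact Submodule.smul_mem _ _ (memM k _)
  -- brackets with an N generator, for the carrier containing all N's
  have memN3 : ∀ n : ℤ, h.b (.N n) ∈ Submodule.span ℂ (h.b '' sIdx 3) := by
    intro n
    refine basis_mem_span h ?_
    simp [sIdx]
  have hN3 : ∀ (j) (n : ℤ), ⁅h.b j, h.b (.N n)⁆ ∈ Submodule.span ℂ (h.b '' sIdx 3) := by
    intro j n
    cases j with
    | L m => rw [h.LN]; exact Submodule.smul_mem _ _ (memN3 _)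
    | M m => rw [MN]; exact Submodule.smul_mem _ _ (memM 3 _)
    | N m => rw [h.NN]; exact Submodule.zero_mem _
    | Y m => rw [YN]; exact Submodule.neg_mem _ (memY 3 (by decide) _)
  have hN0 : ∀ (j), ⁅h.b j, h.b (.N 0)⁆ ∈ Submodule.span ℂ (h.b '' sIdx 2) := by
    intro j
    cases j with
    | L m => rw [h.LN]; simp
    | M m => rw [MN]; exact Submodule.smul_mem _ _ (memM 2 _)
    | N m => rw [h.NN]; exact Submodule.zero_mem _
    | Y m => rw [YN]; exact Submodule.neg_mem _ (memY 2 (by decide) _)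
  intro j i hi
  fin_cases k
  · obtain ⟨n, rfl⟩ := hi
    exact hM 0 j n
  · rcases hi with ⟨n, rfl⟩ | ⟨n, rfl⟩
    · exact hM 1 j n
    · exact hY 1 (by decide) j n
  · rcases hi with (⟨n, rfl⟩ | ⟨n, rfl⟩) | hi
    · exact hM 2 j n
    · exact hY 2 (by decide) j n
    · rw [Set.mem_singleton_iff] at hi
      subst hi
      exact hN0 j
  · rcases hi with (⟨n, rfl⟩ | ⟨n, rfl⟩) | ⟨n, rfl⟩
    · exact hM 3 j n
    · exact hN3 j n
    · exact hY 3 (by decide) j n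


lemma L_not_mem_sIdx (k : Fin 4) (n : ℤ) : SVIdx.L n ∉ sIdx k := by
  fin_cases k <;> simp [sIdx]

lemma M_mem_sIdx (k : Fin 4) (n : ℤ) : SVIdx.M n ∈ sIdx k := by
  fin_cases k <;> simp [sIdx]

noncomputable def mkJ (k : Fin 4) : LieIdeal ℂ g :=
  { Submodule.span ℂ (h.b '' sIdx k) with
    lie_mem := fun {x m} hm => lie_mem_span h (sIdx_closed h k) x hm }

lemma mkJ_coe (k : Fin 4) : (mkJ h k : Submodule ℂ g) = Submodule.span ℂ (h.b '' sIdx k) :=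
  rfl

lemma mkJ_mem {k : Fin 4} {x : g} : x ∈ mkJ h k ↔ x ∈ Submodule.span ℂ (h.b '' sIdx k) :=
  Iff.rfl

lemma mkJ_ne_bot (k : Fin 4) : mkJ h k ≠ ⊥ := by
  intro hbot
  have hmem : h.b (.M 0) ∈ mkJ h k := (mkJ_mem h).2 (basis_mem_span h (M_mem_sIdx k 0))
  rw [hbot] at hmem
  exact h.b.ne_zero (.M 0) ((LieSubmodule.mem_bot _).1 hmem)

lemma mkJ_ne_top (k : Fin 4) : mkJ h k ≠ ⊤ := by
  intro htop
  have hmem : h.b (.L 0) ∈ mkJ h k := by rw [htop]; trivial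
  have := repr_zero_of_mem_span h ((mkJ_mem h).1 hmem) (L_not_mem_sIdx k 0)
  rw [Module.Basis.repr_self] at this
  simp at this

lemma part2 (k : Fin 4) : ∃ J : LieIdeal ℂ g,
    (J : Submodule ℂ g) = ExtSV.idealCarriers h k ∧ J ≠ ⊥ ∧ J ≠ ⊤ := by
  exact ⟨mkJ h k, by rw [mkJ_coe, carrier_eq], mkJ_ne_bot h k, mkJ_ne_top h k⟩


/-! ### Classification -/

lemma part1 (I : LieIdeal ℂ g) (hbot : I ≠ ⊥) (htop : I ≠ ⊤) :
    ∃ k : Fin 4, (I : Submodule ℂ g) = ExtSV.idealCarriers h k := by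
  classical
  -- notation
  set r : g → SVIdx →₀ ℂ := fun x => h.b.repr x with hr
  -- Case 1: some element of I has a nonzero L-coordinate; then I = ⊤, contradiction.
  by_cases hL : ∃ x, x ∈ I ∧ ∃ n, r x (.L n) ≠ 0
  · exfalso
    obtain ⟨x, hxI, n, ha⟩ := hL
    set a := r x (.L n) with hadef
    set bb := r x (.M n) with hbbdef
    set cc := r x (.N n) with hccdef
    have hyI : a • h.b (.L n) + bb • h.b (.M n) + cc • h.b (.N n) ∈ I := by
      have := proj_mem h I hxI (2*n)
      rwa [proj_even] at this
    -- get a Y into I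
    have hkex : ∃ k : ℤ, a * ((k:ℂ) + (1 - (n:ℂ))/2) + cc ≠ 0 := by
      rcases eq_or_ne (a * (((0:ℤ):ℂ) + (1 - (n:ℂ))/2) + cc) 0 with h0 | h0
      · refine ⟨1, fun h1 => ha ?_⟩
        have : a = 0 := by push_cast at h0 h1; linear_combination h1 - h0
        exact this
      · exact ⟨0, h0⟩
    obtain ⟨k, hk⟩ := hkex
    have hbr : ⁅h.b (.Y k), a • h.b (.L n) + bb • h.b (.M n) + cc • h.b (.N n)⁆ ∈ I :=
      I.lie_mem hyI
    have hcomp : ⁅h.b (.Y k), a • h.b (.L n) + bb • h.b (.M n) + cc • h.b (.N n)⁆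
        = (-(a * ((k:ℂ) + (1 - (n:ℂ))/2) + cc)) • h.b (.Y (n + k)) := by
      rw [lie_add, lie_add, lie_smul, lie_smul, lie_smul, YL, YM, YN, smul_zero]
      module
    rw [hcomp] at hbr
    have hYnk : h.b (.Y (n + k)) ∈ I := smul_cancel (neg_ne_zero.2 hk) hbr
    have hYall := allY_of_Y h hYnk
    have hMall := allM_of_allY h hYall
    -- remove the M part
    have hzI : a • h.b (.L n) + cc • h.b (.N n) ∈ I := by
      have h1 := I.sub_mem hyI (I.smul_mem bb (hMall n))
      convert (show _ ∈ I from h1) using 1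
      module
    -- get an N into I
    set k' : ℤ := if n = -1 then 2 else 1 with hk'def
    have hk'0 : (k':ℂ) ≠ 0 := by
      have : k' ≠ 0 := by rw [hk'def]; split_ifs <;> omega
      exact_mod_cast this
    have hnk' : n + k' ≠ 0 := by rw [hk'def]; split_ifs <;> omega
    have hbr2 : ⁅h.b (.N k'), a • h.b (.L n) + cc • h.b (.N n)⁆ ∈ I := I.lie_mem hzI
    have hcomp2 : ⁅h.b (.N k'), a • h.b (.L n) + cc • h.b (.N n)⁆
        = (a * (-(k':ℂ))) • h.b (.N (n + k')) := by
      rw [lie_add, lie_smul, lie_smul, NL, h.NN, smul_zero]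
      module
    rw [hcomp2] at hbr2
    have hNnk : h.b (.N (n + k')) ∈ I :=
      smul_cancel (mul_ne_zero ha (neg_ne_zero.2 hk'0)) hbr2
    have hNall := allN_of_N h hnk' hNnk
    -- get L_n into I
    have hLn : a • h.b (.L n) ∈ I := by
      have h1 := I.sub_mem hzI (I.smul_mem cc (hNall n))
      convert (show _ ∈ I from h1) using 1
      module
    exact htop (eq_top_of_L h (smul_cancel ha hLn))
  · push_neg at hL
    -- Case 2: a nonzero N-coordinate at an index n ≠ 0; then I = I₄.
    by_cases hNz : ∃ x, x ∈ I ∧ ∃ n, n ≠ 0 ∧ r x (.N n) ≠ 0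
    · obtain ⟨x, hxI, n, hn0, hc⟩ := hNz
      set bb := r x (.M n) with hbbdef
      set cc := r x (.N n) with hccdef
      have hyI : bb • h.b (.M n) + cc • h.b (.N n) ∈ I := by
        have hp := proj_mem h I hxI (2*n)
        rw [proj_even, hL x hxI n, zero_smul, zero_add] at hp
        exact hp
      have hbr : ⁅h.b (.Y 0), bb • h.b (.M n) + cc • h.b (.N n)⁆ ∈ I := I.lie_mem hyI
      have hcomp : ⁅h.b (.Y 0), bb • h.b (.M n) + cc • h.b (.N n)⁆
          = (-cc) • h.b (.Y (n + 0)) := by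
        rw [lie_add, lie_smul, lie_smul, YM, YN, smul_zero]
        module
      rw [hcomp] at hbr
      have hYall := allY_of_Y h (smul_cancel (neg_ne_zero.2 hc) hbr)
      have hMall := allM_of_allY h hYall
      have hNn : h.b (.N n) ∈ I := by
        apply smul_cancel hc
        have h1 := I.sub_mem hyI (I.smul_mem bb (hMall n))
        convert (show _ ∈ I from h1) using 1
        module
      have hNall := allN_of_N h hn0 hNn
      refine ⟨3, ?_⟩
      rw [carrier_eq]
      apply le_antisymm
      · intro v hv
        apply mem_span_of_repr
        intro i hi
        have hvI : v ∈ I := (LieSubmodule.mem_toSubmodule _).1 hv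
        cases i with
        | L m => exact absurd (hL v hvI m) hi
        | M m => simp [sIdx]
        | N m => simp [sIdx]
        | Y m => simp [sIdx]
      · refine Submodule.span_le.2 ?_
        rintro v ⟨i, hi, rfl⟩
        simp only [sIdx, Set.mem_union, Set.mem_range] at hi
        rcases hi with (⟨m, rfl⟩ | ⟨m, rfl⟩) | ⟨m, rfl⟩
        · exact hMall m
        · exact hNall m
        · exact hYall m
    · push_neg at hNz
      -- Case 3: a nonzero N₀-coordinate; then I = I₃.
      by_cases hN0 : ∃ x, x ∈ I ∧ r x (.N 0) ≠ 0
      · obtain ⟨x, hxI, hc⟩ := hN0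
        set bb := r x (.M 0) with hbbdef
        set cc := r x (.N 0) with hccdef
        have hyI : bb • h.b (.M 0) + cc • h.b (.N 0) ∈ I := by
          have hp := proj_mem h I hxI (2*0)
          rw [proj_even, hL x hxI 0, zero_smul, zero_add] at hp
          exact hp
        have hbr : ⁅h.b (.Y 0), bb • h.b (.M 0) + cc • h.b (.N 0)⁆ ∈ I := I.lie_mem hyI
        have hcomp : ⁅h.b (.Y 0), bb • h.b (.M 0) + cc • h.b (.N 0)⁆
            = (-cc) • h.b (.Y (0 + 0)) := by
          rw [lie_add, lie_smul, lie_smul, YM, YN, smul_zero]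
          module
        rw [hcomp] at hbr
        have hYall := allY_of_Y h (smul_cancel (neg_ne_zero.2 hc) hbr)
        have hMall := allM_of_allY h hYall
        have hN0I : h.b (.N 0) ∈ I := by
          apply smul_cancel hc
          have h1 := I.sub_mem hyI (I.smul_mem bb (hMall 0))
          convert (show _ ∈ I from h1) using 1
          module
        refine ⟨2, ?_⟩
        rw [carrier_eq]
        apply le_antisymm
        · intro v hv
          apply mem_span_of_repr
          intro i hi
          have hvI : v ∈ I := (LieSubmodule.mem_toSubmodule _).1 hv
          cases i with
          | L m => exact absurd (hL v hvI m) hi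
          | M m => simp [sIdx]
          | N m =>
            rcases eq_or_ne m 0 with rfl | hm
            · simp [sIdx]
            · exact absurd (hNz v hvI m hm) hi
          | Y m => simp [sIdx]
        · refine Submodule.span_le.2 ?_
          rintro v ⟨i, hi, rfl⟩
          simp only [sIdx, Set.mem_union, Set.mem_range, Set.mem_singleton_iff] at hi
          rcases hi with (⟨m, rfl⟩ | ⟨m, rfl⟩) | rfl
          · exact hMall m
          · exact hYall m
          · exact hN0I
      · push_neg at hN0
        have hNf : ∀ v ∈ I, ∀ m : ℤ, r v (.N m) = 0 := by
          intro v hv m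
          rcases eq_or_ne m 0 with rfl | hm
          · exact hN0 v hv
          · exact hNz v hv m hm
        -- Case 4: a nonzero Y-coordinate; then I = I₂.
        by_cases hY : ∃ x, x ∈ I ∧ ∃ n, r x (.Y n) ≠ 0
        · obtain ⟨x, hxI, j, hc⟩ := hY
          have hyI : r x (.Y j) • h.b (.Y j) ∈ I := by
            have hp := proj_mem h I hxI (2*j+1)
            rwa [proj_odd] at hp
          have hYall := allY_of_Y h (smul_cancel hc hyI)
          have hMall := allM_of_allY h hYall
          refine ⟨1, ?_⟩
          rw [carrier_eq]
          apply le_antisymm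
          · intro v hv
            apply mem_span_of_repr
            intro i hi
            have hvI : v ∈ I := (LieSubmodule.mem_toSubmodule _).1 hv
            cases i with
            | L m => exact absurd (hL v hvI m) hi
            | M m => simp [sIdx]
            | N m => exact absurd (hNf v hvI m) hi
            | Y m => simp [sIdx]
          · refine Submodule.span_le.2 ?_
            rintro v ⟨i, hi, rfl⟩
            simp only [sIdx, Set.mem_union, Set.mem_range] at hi
            rcases hi with ⟨m, rfl⟩ | ⟨m, rfl⟩
            · exact hMall m
            · exact hYall m
        · push_neg at hY
          -- Case 5: only M-coordinates; then I = I₁.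
          have hex : ∃ x ∈ I, x ≠ 0 := by
            by_contra hcon
            push_neg at hcon
            exact hbot ((LieSubmodule.eq_bot_iff _).2 hcon)
          obtain ⟨x, hxI, hxne⟩ := hex
          have hexi : ∃ i, r x i ≠ 0 := by
            by_contra hcon
            push_neg at hcon
            have hrx : h.b.repr x = 0 := by ext i; simpa using hcon i
            apply hxne
            apply h.b.repr.injective
            simp [hrx]
          obtain ⟨i0, hi0⟩ := hexi
          obtain ⟨j, hj⟩ : ∃ j : ℤ, r x (.M j) ≠ 0 := by
            cases i0 with
            | L m => exact absurd (hL x hxI m) hi0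
            | M m => exact ⟨m, hi0⟩
            | N m => exact absurd (hNf x hxI m) hi0
            | Y m => exact absurd (hY x hxI m) hi0
          have hyI : r x (.M j) • h.b (.M j) ∈ I := by
            have hp := proj_mem h I hxI (2*j)
            rwa [proj_even, hL x hxI j, zero_smul, zero_add, hNf x hxI j, zero_smul,
              add_zero] at hp
          have hMall := allM_of_M h (smul_cancel hj hyI)
          refine ⟨0, ?_⟩
          rw [carrier_eq]
          apply le_antisymm
          · intro v hv
            apply mem_span_of_repr
            intro i hi
            have hvI : v ∈ I := (LieSubmodule.mem_toSubmodule _).1 hv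
            cases i with
            | L m => exact absurd (hL v hvI m) hi
            | M m => simp [sIdx]
            | N m => exact absurd (hNf v hvI m) hi
            | Y m => exact absurd (hY v hvI m) hi
          · refine Submodule.span_le.2 ?_
            rintro v ⟨i, hi, rfl⟩
            simp only [sIdx, Set.mem_range] at hi
            obtain ⟨m, rfl⟩ := hi
            exact hMall m

end ExtSVAux

/-- The only nontrivial proper ideals of `sv~` are `I₁ = span{M_n}`,
`I₂ = span{M_n, Y_{n+1/2}}`, `I₃ = span{M_n, Y_{n+1/2}} ⊕ ℂ N₀` and
`I₄ = span{M_n, N_n, Y_{n+1/2}}`. -/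
theorem extSV_ideals {g : Type*} [LieRing g] [LieAlgebra ℂ g] (h : ExtSV g) :
    (∀ I : LieIdeal ℂ g, I ≠ ⊥ → I ≠ ⊤ →
      ∃ k : Fin 4, (I : Submodule ℂ g) = h.idealCarriers k) ∧
    (∀ k : Fin 4, ∃ J : LieIdeal ℂ g,
      (J : Submodule ℂ g) = h.idealCarriers k ∧ J ≠ ⊥ ∧ J ≠ ⊤) := by
  exact ⟨fun I => ExtSVAux.part1 h I, ExtSVAux.part2 h⟩
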